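/- Define η₁(k) = −1/24 + ((1 + k²)E(k) − (1 − k²)K(k)) / (6·(2E(k) − (1 − k²)K(k))³) for k ∈ (0,1). Then η₁ is strictly increasing on (0,1), η₁(k) → −1/24 as k → 0⁺, η₁(k) → 0 as k → 1⁻, and consequently η₁ is a bijection from (0,1) onto the interval (−1/24, 0). -/

import Mathlib

noncomputable section

/-- The complete elliptic integral of the first kind with modulus `k`. -/
def ellipticK (k : ℝ) : ℝ :=
  ∫ θ in (0:ℝ)..(Real.pi / 2), 1 / Real.sqrt (1 - k ^ 2 * Real.sin θ ^ 2)

/-- The complete elliptic integral of the second kind with modulus `k`. -/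
def ellipticE (k : ℝ) : ℝ :=
  ∫ θ in (0:ℝ)..(Real.pi / 2), Real.sqrt (1 - k ^ 2 * Real.sin θ ^ 2)

/-- The function `η₁` parametrizing points of the Martinet plane reached by normal
extremals at `τ = 2K`. -/
def eta1 (k : ℝ) : ℝ :=
  -1 / 24 + ((1 + k ^ 2) * ellipticE k - (1 - k ^ 2) * ellipticK k) /
    (6 * (2 * ellipticE k - (1 - k ^ 2) * ellipticK k) ^ 3)

open Real intervalIntegral MeasureTheory Set

namespace Eta1Aux

lemma Q_lb {k : ℝ} (θ : ℝ) : 1 - k ^ 2 ≤ 1 - k ^ 2 * Real.sin θ ^ 2 := by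
  nlinarith [Real.sin_sq_le_one θ, sq_nonneg k, sq_nonneg (Real.sin θ)]

lemma Q_pos {k : ℝ} (hk : k ^ 2 < 1) (θ : ℝ) : 0 < 1 - k ^ 2 * Real.sin θ ^ 2 :=
  lt_of_lt_of_le (by linarith) (Q_lb θ)

lemma Q_le_one {k : ℝ} (θ : ℝ) : 1 - k ^ 2 * Real.sin θ ^ 2 ≤ 1 := by
  nlinarith [sq_nonneg k, sq_nonneg (Real.sin θ)]

lemma sqrtQ_pos {k : ℝ} (hk : k ^ 2 < 1) (θ : ℝ) :
    0 < Real.sqrt (1 - k ^ 2 * Real.sin θ ^ 2) :=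
  Real.sqrt_pos.2 (Q_pos hk θ)

lemma contE {k : ℝ} : Continuous fun θ : ℝ => Real.sqrt (1 - k ^ 2 * Real.sin θ ^ 2) := by
  fun_prop

lemma contK {k : ℝ} (hk : k ^ 2 < 1) :
    Continuous fun θ : ℝ => 1 / Real.sqrt (1 - k ^ 2 * Real.sin θ ^ 2) :=
  continuous_const.div contE fun θ => (sqrtQ_pos hk θ).ne'

lemma intE {k : ℝ} : IntervalIntegrable
    (fun θ : ℝ => Real.sqrt (1 - k ^ 2 * Real.sin θ ^ 2)) volume 0 (Real.pi / 2) :=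
  contE.intervalIntegrable _ _

lemma intK {k : ℝ} (hk : k ^ 2 < 1) : IntervalIntegrable
    (fun θ : ℝ => 1 / Real.sqrt (1 - k ^ 2 * Real.sin θ ^ 2)) volume 0 (Real.pi / 2) :=
  (contK hk).intervalIntegrable _ _

lemma K_ge {k : ℝ} (hk : k ^ 2 < 1) : Real.pi / 2 ≤ ellipticK k := by
  have h := intervalIntegral.integral_mono_on (f := fun _ : ℝ => (1:ℝ))
    (g := fun θ : ℝ => 1 / Real.sqrt (1 - k ^ 2 * Real.sin θ ^ 2))
    (by positivity) (intervalIntegrable_const) (intK hk) ?_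
  · simpa [ellipticK] using h
  · intro θ _
    rw [le_div_iff₀ (sqrtQ_pos hk θ), one_mul]
    exact Real.sqrt_le_one.2 (Q_le_one θ)

lemma E_le_K {k : ℝ} (hk : k ^ 2 < 1) : ellipticE k ≤ ellipticK k := by
  refine intervalIntegral.integral_mono_on (by positivity) intE (intK hk) fun θ _ => ?_
  rw [le_div_iff₀ (sqrtQ_pos hk θ)]
  calc Real.sqrt (1 - k ^ 2 * Real.sin θ ^ 2) * Real.sqrt (1 - k ^ 2 * Real.sin θ ^ 2)
      = 1 - k ^ 2 * Real.sin θ ^ 2 := Real.mul_self_sqrt (Q_pos hk θ).le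
    _ ≤ 1 := Q_le_one θ


lemma E_le {k : ℝ} : ellipticE k ≤ Real.pi / 2 := by
  have h := intervalIntegral.integral_mono_on (μ := volume)
    (f := fun θ : ℝ => Real.sqrt (1 - k ^ 2 * Real.sin θ ^ 2))
    (g := fun _ : ℝ => (1:ℝ)) (by positivity) intE intervalIntegrable_const
    (fun θ _ => Real.sqrt_le_one.2 (Q_le_one θ))
  simpa [ellipticE] using h

/-- `E - (1-k)K > 0` for `k ∈ (0,1)`. -/
lemma E_sub_one_sub_k_K_pos {k : ℝ} (hk0 : 0 < k) (hk1 : k < 1) :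
    0 < ellipticE k - (1 - k) * ellipticK k := by
  have hk2 : k ^ 2 < 1 := by nlinarith
  have key : ellipticE k - (1 - k) * ellipticK k
      = ∫ θ in (0:ℝ)..(Real.pi / 2),
        (Real.sqrt (1 - k ^ 2 * Real.sin θ ^ 2)
          - (1 - k) * (1 / Real.sqrt (1 - k ^ 2 * Real.sin θ ^ 2))) := by
    rw [intervalIntegral.integral_sub intE (((intK hk2).const_mul (1 - k)).congr ?_)]
    · rw [intervalIntegral.integral_const_mul]; rfl
    · exact fun _ _ => rfl
  rw [key]
  refine intervalIntegral.integral_pos (by positivity) ?_ ?_ ?_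
  · apply Continuous.continuousOn
    exact contE.sub (continuous_const.mul (contK hk2))
  · intro θ _
    have hq := Q_pos hk2 θ
    have hs := sqrtQ_pos hk2 θ
    rw [sub_nonneg, mul_one_div, div_le_iff₀ hs, Real.mul_self_sqrt hq.le]
    nlinarith [Real.sin_sq_le_one θ, sq_nonneg (Real.sin θ)]
  · refine ⟨0, ⟨le_refl _, by positivity⟩, ?_⟩
    have hq := Q_pos hk2 0
    have hs := sqrtQ_pos hk2 0
    rw [sub_pos, mul_one_div, div_lt_iff₀ hs, Real.mul_self_sqrt hq.le]
    simp [Real.sin_zero]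
    nlinarith

/-- `g = 2E - (1-k²)K > 0` for `k ∈ (0,1)`. -/
lemma g_pos {k : ℝ} (hk0 : 0 < k) (hk1 : k < 1) :
    0 < 2 * ellipticE k - (1 - k ^ 2) * ellipticK k := by
  have hk2 : k ^ 2 < 1 := by nlinarith
  have key : 2 * ellipticE k - (1 - k ^ 2) * ellipticK k
      = ∫ θ in (0:ℝ)..(Real.pi / 2),
        (2 * Real.sqrt (1 - k ^ 2 * Real.sin θ ^ 2)
          - (1 - k ^ 2) * (1 / Real.sqrt (1 - k ^ 2 * Real.sin θ ^ 2))) := by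
    rw [intervalIntegral.integral_sub (intE.const_mul 2) ((intK hk2).const_mul (1 - k ^ 2)),
      intervalIntegral.integral_const_mul, intervalIntegral.integral_const_mul]
    rfl
  rw [key]
  refine intervalIntegral.integral_pos (by positivity) ?_ ?_ ?_
  · exact ((continuous_const.mul contE).sub (continuous_const.mul (contK hk2))).continuousOn
  · intro θ _
    have hq := Q_pos hk2 θ
    have hs := sqrtQ_pos hk2 θ
    rw [sub_nonneg, mul_one_div, div_le_iff₀ hs, mul_assoc, Real.mul_self_sqrt hq.le]
    nlinarith [Real.sin_sq_le_one θ, sq_nonneg (Real.sin θ), sq_nonneg k]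
  · refine ⟨0, ⟨le_refl _, by positivity⟩, ?_⟩
    have hq := Q_pos hk2 0
    have hs := sqrtQ_pos hk2 0
    rw [sub_pos, mul_one_div, div_lt_iff₀ hs, mul_assoc, Real.mul_self_sqrt hq.le]
    simp [Real.sin_zero]
    nlinarith

/-- `(1+k)K - E > 0`. -/
lemma one_add_k_K_sub_E_pos {k : ℝ} (hk0 : 0 < k) (hk1 : k < 1) :
    0 < (1 + k) * ellipticK k - ellipticE k := by
  have hk2 : k ^ 2 < 1 := by nlinarith
  have h1 := K_ge hk2
  have h2 := E_le_K hk2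
  have hpi := Real.pi_pos
  nlinarith


lemma ball_subset {k x : ℝ} (hk0 : 0 < k) (hk1 : k < 1)
    (hx : x ∈ Metric.ball k (min k (1 - k) / 2)) :
    k / 2 ≤ x ∧ x ≤ (1 + k) / 2 := by
  rw [Metric.mem_ball, Real.dist_eq, abs_lt] at hx
  constructor
  · nlinarith [min_le_left k (1 - k), min_le_right k (1 - k), hx.1]
  · nlinarith [min_le_left k (1 - k), min_le_right k (1 - k), hx.2]

lemma hasDerivAt_E_aux {k : ℝ} (hk0 : 0 < k) (hk1 : k < 1) :
    HasDerivAt ellipticE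
      (∫ θ in (0:ℝ)..(Real.pi / 2),
        -(k * Real.sin θ ^ 2 / Real.sqrt (1 - k ^ 2 * Real.sin θ ^ 2))) k := by
  set b : ℝ := (1 + k) / 2 with hb
  have hb1 : b < 1 := by rw [hb]; linarith
  have hb0 : 0 < b := by rw [hb]; linarith
  have hbsq : b ^ 2 < 1 := by nlinarith
  have hεpos : 0 < min k (1 - k) / 2 := by
    have := lt_min hk0 (by linarith : (0:ℝ) < 1 - k); positivity
  have hk2 : k ^ 2 < 1 := by nlinarith
  have h := intervalIntegral.hasDerivAt_integral_of_dominated_loc_of_deriv_le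
    (F := fun x θ => Real.sqrt (1 - x ^ 2 * Real.sin θ ^ 2))
    (F' := fun x θ => -(x * Real.sin θ ^ 2 / Real.sqrt (1 - x ^ 2 * Real.sin θ ^ 2)))
    (x₀ := k) (a := 0) (b := Real.pi / 2) (μ := volume)
    (bound := fun _ => 1 / Real.sqrt (1 - b ^ 2)) (Metric.ball_mem_nhds k hεpos)
    (Filter.Eventually.of_forall fun x => contE.aestronglyMeasurable.restrict)
    intE ?_ ?_ ?_ ?_
  · exact h.2
  · apply Continuous.aestronglyMeasurable
    exact (continuous_const.mul (Real.continuous_sin.pow 2)).div contE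
      (fun θ => (sqrtQ_pos hk2 θ).ne') |>.neg
  · refine Filter.Eventually.of_forall fun θ _ x hx => ?_
    obtain ⟨hx1, hx2⟩ := ball_subset hk0 hk1 hx
    have hx0 : 0 < x := lt_of_lt_of_le (by positivity) hx1
    have hxb : x ≤ b := hx2
    have hxsq : x ^ 2 < 1 := by nlinarith
    have hq := Q_pos hxsq θ
    have hs := sqrtQ_pos hxsq θ
    rw [norm_neg, Real.norm_eq_abs, abs_div]
    rw [abs_of_nonneg (by positivity : (0:ℝ) ≤ x * Real.sin θ ^ 2),
      abs_of_pos hs]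
    have hsb : Real.sqrt (1 - b ^ 2) ≤ Real.sqrt (1 - x ^ 2 * Real.sin θ ^ 2) := by
      apply Real.sqrt_le_sqrt
      nlinarith [Real.sin_sq_le_one θ, sq_nonneg (Real.sin θ)]
    have hb2 : 0 < Real.sqrt (1 - b ^ 2) := Real.sqrt_pos.2 (by nlinarith)
    rw [div_le_div_iff₀ hs hb2]
    have h1 : x * Real.sin θ ^ 2 ≤ 1 := by nlinarith [Real.sin_sq_le_one θ]
    nlinarith
  · exact intervalIntegrable_const
  · refine Filter.Eventually.of_forall fun θ _ x hx => ?_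
    obtain ⟨hx1, hx2⟩ := ball_subset hk0 hk1 hx
    have hx0 : 0 < x := lt_of_lt_of_le (by positivity) hx1
    have hxsq : x ^ 2 < 1 := by nlinarith
    have hq := Q_pos hxsq θ
    have hs := sqrtQ_pos hxsq θ
    have hinner : HasDerivAt (fun y : ℝ => 1 - y ^ 2 * Real.sin θ ^ 2)
        (-(2 * x * Real.sin θ ^ 2)) x := by
      have := ((hasDerivAt_pow 2 x).mul_const (Real.sin θ ^ 2)).const_sub 1
      refine this.congr_deriv (Eq.symm ?_)
      ring
    have := hinner.sqrt hq.ne'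
    refine this.congr_deriv (Eq.symm ?_)
    rw [eq_div_iff (by positivity)]
    field_simp


lemma hasDerivAt_E {k : ℝ} (hk0 : 0 < k) (hk1 : k < 1) :
    HasDerivAt ellipticE ((ellipticE k - ellipticK k) / k) k := by
  have hk2 : k ^ 2 < 1 := by nlinarith
  have h := hasDerivAt_E_aux hk0 hk1
  convert h using 1
  rw [ellipticE, ellipticK, ← intervalIntegral.integral_sub intE (intK hk2),
    ← intervalIntegral.integral_div]
  refine intervalIntegral.integral_congr fun θ _ => ?_
  have hq := Q_pos hk2 θ
  have hs := sqrtQ_pos hk2 θ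
  have hsq : Real.sqrt (1 - k ^ 2 * Real.sin θ ^ 2) ^ 2 = 1 - k ^ 2 * Real.sin θ ^ 2 :=
    Real.sq_sqrt hq.le
  field_simp
  nlinarith [hsq]

def Jint (k : ℝ) : ℝ :=
  ∫ θ in (0:ℝ)..(Real.pi / 2),
    1 / ((1 - k ^ 2 * Real.sin θ ^ 2) * Real.sqrt (1 - k ^ 2 * Real.sin θ ^ 2))

lemma contJ {k : ℝ} (hk : k ^ 2 < 1) :
    Continuous fun θ : ℝ =>
      1 / ((1 - k ^ 2 * Real.sin θ ^ 2) * Real.sqrt (1 - k ^ 2 * Real.sin θ ^ 2)) := by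
  refine continuous_const.div ?_ fun θ => ?_
  · exact ((continuous_const.sub (continuous_const.mul (Real.continuous_sin.pow 2)))).mul contE
  · exact (mul_pos (Q_pos hk θ) (sqrtQ_pos hk θ)).ne'

lemma intJ {k : ℝ} (hk : k ^ 2 < 1) : IntervalIntegrable
    (fun θ : ℝ =>
      1 / ((1 - k ^ 2 * Real.sin θ ^ 2) * Real.sqrt (1 - k ^ 2 * Real.sin θ ^ 2)))
    volume 0 (Real.pi / 2) :=
  (contJ hk).intervalIntegrable _ _

lemma hasDerivAt_K_aux {k : ℝ} (hk0 : 0 < k) (hk1 : k < 1) :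
    HasDerivAt ellipticK
      (∫ θ in (0:ℝ)..(Real.pi / 2),
        k * Real.sin θ ^ 2 /
          ((1 - k ^ 2 * Real.sin θ ^ 2) * Real.sqrt (1 - k ^ 2 * Real.sin θ ^ 2))) k := by
  set b : ℝ := (1 + k) / 2 with hb
  have hb1 : b < 1 := by rw [hb]; linarith
  have hb0 : 0 < b := by rw [hb]; linarith
  have hbsq : b ^ 2 < 1 := by nlinarith
  have hεpos : 0 < min k (1 - k) / 2 := by
    have := lt_min hk0 (by linarith : (0:ℝ) < 1 - k); positivity
  have hk2 : k ^ 2 < 1 := by nlinarith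
  have h := intervalIntegral.hasDerivAt_integral_of_dominated_loc_of_deriv_le
    (F := fun x θ => 1 / Real.sqrt (1 - x ^ 2 * Real.sin θ ^ 2))
    (F' := fun x θ => x * Real.sin θ ^ 2 /
      ((1 - x ^ 2 * Real.sin θ ^ 2) * Real.sqrt (1 - x ^ 2 * Real.sin θ ^ 2)))
    (x₀ := k) (a := 0) (b := Real.pi / 2) (μ := volume)
    (bound := fun _ => 1 / ((1 - b ^ 2) * Real.sqrt (1 - b ^ 2))) (Metric.ball_mem_nhds k hεpos)
    ?_ (intK hk2) ?_ ?_ ?_ ?_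
  · exact h.2
  · refine Filter.Eventually.of_forall fun x => Measurable.aestronglyMeasurable ?_
    exact measurable_const.div (Real.continuous_sqrt.measurable.comp
      ((continuous_const.sub (continuous_const.mul (Real.continuous_sin.pow 2))).measurable))
  · exact ((continuous_const.mul (Real.continuous_sin.pow 2)).div
      (((continuous_const.sub (continuous_const.mul (Real.continuous_sin.pow 2)))).mul contE)
      fun θ => (mul_pos (Q_pos hk2 θ) (sqrtQ_pos hk2 θ)).ne').aestronglyMeasurable
  · refine Filter.Eventually.of_forall fun θ _ x hx => ?_
    obtain ⟨hx1, hx2⟩ := ball_subset hk0 hk1 hx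
    have hx0 : 0 < x := lt_of_lt_of_le (by positivity) hx1
    have hxb : x ≤ b := hx2
    have hxsq : x ^ 2 < 1 := by nlinarith
    have hq := Q_pos hxsq θ
    have hs := sqrtQ_pos hxsq θ
    have hqb : 0 < 1 - b ^ 2 := by nlinarith
    have hsb0 : 0 < Real.sqrt (1 - b ^ 2) := Real.sqrt_pos.2 hqb
    have hqge : 1 - b ^ 2 ≤ 1 - x ^ 2 * Real.sin θ ^ 2 := by
      nlinarith [Real.sin_sq_le_one θ, sq_nonneg (Real.sin θ)]
    have hsb : Real.sqrt (1 - b ^ 2) ≤ Real.sqrt (1 - x ^ 2 * Real.sin θ ^ 2) :=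
      Real.sqrt_le_sqrt hqge
    rw [Real.norm_eq_abs, abs_div,
      abs_of_nonneg (by positivity : (0:ℝ) ≤ x * Real.sin θ ^ 2),
      abs_of_pos (mul_pos hq hs)]
    rw [div_le_div_iff₀ (mul_pos hq hs) (mul_pos hqb hsb0)]
    have h1 : x * Real.sin θ ^ 2 ≤ 1 := by nlinarith [Real.sin_sq_le_one θ]
    have h2 : (1 - b ^ 2) * Real.sqrt (1 - b ^ 2) ≤
        (1 - x ^ 2 * Real.sin θ ^ 2) * Real.sqrt (1 - x ^ 2 * Real.sin θ ^ 2) := by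
      exact mul_le_mul hqge hsb hsb0.le hq.le
    nlinarith [mul_pos hqb hsb0]
  · exact intervalIntegrable_const
  · refine Filter.Eventually.of_forall fun θ _ x hx => ?_
    obtain ⟨hx1, hx2⟩ := ball_subset hk0 hk1 hx
    have hx0 : 0 < x := lt_of_lt_of_le (by positivity) hx1
    have hxsq : x ^ 2 < 1 := by nlinarith
    have hq := Q_pos hxsq θ
    have hs := sqrtQ_pos hxsq θ
    have hinner : HasDerivAt (fun y : ℝ => 1 - y ^ 2 * Real.sin θ ^ 2)
        (-(2 * x * Real.sin θ ^ 2)) x := by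
      have := ((hasDerivAt_pow 2 x).mul_const (Real.sin θ ^ 2)).const_sub 1
      refine this.congr_deriv (Eq.symm ?_)
      ring
    have hsqrt := hinner.sqrt hq.ne'
    have hinv := hsqrt.inv hs.ne'
    have heq : ∀ y : ℝ, (Real.sqrt (1 - y ^ 2 * Real.sin θ ^ 2))⁻¹
        = 1 / Real.sqrt (1 - y ^ 2 * Real.sin θ ^ 2) := fun y => (one_div _).symm
    simp only [Pi.inv_def, heq] at hinv
    refine hinv.congr_deriv (Eq.symm ?_)
    have hsq : Real.sqrt (1 - x ^ 2 * Real.sin θ ^ 2) ^ 2 = 1 - x ^ 2 * Real.sin θ ^ 2 :=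
      Real.sq_sqrt hq.le
    rw [eq_div_iff (by positivity)]
    field_simp
    nlinarith [hsq, sq_nonneg (Real.sin θ)]


lemma deriv_alg {s c w k : ℝ} (hw : 0 < w) (hsq : w ^ 2 = 1 - k ^ 2 * s ^ 2)
    (hc : c ^ 2 = 1 - s ^ 2) :
    w - (1 - k ^ 2) * (s ^ 2 / w) - (1 - k ^ 2) * (s ^ 2 / ((1 - k ^ 2 * s ^ 2) * w))
      = ((c * c + s * -s) * w - s * c * (-(k ^ 2 * (2 * s * c)) / (2 * w))) / w ^ 2 := by
  rw [← hsq]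
  have hw' : w ≠ 0 := hw.ne'
  field_simp
  linear_combination (w^2+s^2) * hsq - (w^2+k^2*s^2) * hc

lemma ftc_identity {k : ℝ} (hk2 : k ^ 2 < 1) :
    (∫ θ in (0:ℝ)..(Real.pi / 2),
      (Real.sqrt (1 - k ^ 2 * Real.sin θ ^ 2)
        - (1 - k ^ 2) * (Real.sin θ ^ 2 / Real.sqrt (1 - k ^ 2 * Real.sin θ ^ 2))
        - (1 - k ^ 2) * (Real.sin θ ^ 2 /
            ((1 - k ^ 2 * Real.sin θ ^ 2) * Real.sqrt (1 - k ^ 2 * Real.sin θ ^ 2))))) = 0 := by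
  have key := intervalIntegral.integral_eq_sub_of_hasDerivAt
    (f := fun θ => Real.sin θ * Real.cos θ / Real.sqrt (1 - k ^ 2 * Real.sin θ ^ 2))
    (f' := fun θ => Real.sqrt (1 - k ^ 2 * Real.sin θ ^ 2)
        - (1 - k ^ 2) * (Real.sin θ ^ 2 / Real.sqrt (1 - k ^ 2 * Real.sin θ ^ 2))
        - (1 - k ^ 2) * (Real.sin θ ^ 2 /
            ((1 - k ^ 2 * Real.sin θ ^ 2) * Real.sqrt (1 - k ^ 2 * Real.sin θ ^ 2))))
    (a := 0) (b := Real.pi / 2) ?_ ?_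
  · rw [key]
    simp [Real.cos_pi_div_two, Real.sin_zero]
  · intro θ _
    have hq := Q_pos hk2 θ
    have hs := sqrtQ_pos hk2 θ
    have hsq : Real.sqrt (1 - k ^ 2 * Real.sin θ ^ 2) ^ 2 = 1 - k ^ 2 * Real.sin θ ^ 2 :=
      Real.sq_sqrt hq.le
    have hc : Real.cos θ ^ 2 = 1 - Real.sin θ ^ 2 := by
      nlinarith [Real.sin_sq_add_cos_sq θ]
    have hn : HasDerivAt (fun θ => Real.sin θ * Real.cos θ)
        (Real.cos θ * Real.cos θ + Real.sin θ * (-Real.sin θ)) θ :=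
      (Real.hasDerivAt_sin θ).mul (Real.hasDerivAt_cos θ)
    have hq' : HasDerivAt (fun θ : ℝ => 1 - k ^ 2 * Real.sin θ ^ 2)
        (-(k ^ 2 * (2 * Real.sin θ * Real.cos θ))) θ := by
      have := (((Real.hasDerivAt_sin θ).pow 2).const_mul (k ^ 2)).const_sub 1
      refine this.congr_deriv (Eq.symm ?_)
      ring
    have hsqrt := hq'.sqrt hq.ne'
    have hdiv := hn.div hsqrt hs.ne'
    refine hdiv.congr_deriv (Eq.symm ?_)
    exact deriv_alg hs hsq hc
  · apply Continuous.intervalIntegrable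
    refine (contE.sub (continuous_const.mul ?_)).sub (continuous_const.mul ?_)
    · exact (Real.continuous_sin.pow 2).div contE fun θ => (sqrtQ_pos hk2 θ).ne'
    · exact (Real.continuous_sin.pow 2).div
        ((continuous_const.sub (continuous_const.mul (Real.continuous_sin.pow 2))).mul contE)
        fun θ => (mul_pos (Q_pos hk2 θ) (sqrtQ_pos hk2 θ)).ne'


lemma cont_s2E {k : ℝ} (hk : k ^ 2 < 1) :
    Continuous fun θ : ℝ => Real.sin θ ^ 2 / Real.sqrt (1 - k ^ 2 * Real.sin θ ^ 2) :=
  (Real.continuous_sin.pow 2).div contE fun θ => (sqrtQ_pos hk θ).ne'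

lemma cont_s2J {k : ℝ} (hk : k ^ 2 < 1) :
    Continuous fun θ : ℝ => Real.sin θ ^ 2 /
      ((1 - k ^ 2 * Real.sin θ ^ 2) * Real.sqrt (1 - k ^ 2 * Real.sin θ ^ 2)) :=
  (Real.continuous_sin.pow 2).div
    ((continuous_const.sub (continuous_const.mul (Real.continuous_sin.pow 2))).mul contE)
    fun θ => (mul_pos (Q_pos hk θ) (sqrtQ_pos hk θ)).ne'

lemma int_s2E {k : ℝ} (hk0 : 0 < k) (hk1 : k < 1) :
    (∫ θ in (0:ℝ)..(Real.pi / 2),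
        Real.sin θ ^ 2 / Real.sqrt (1 - k ^ 2 * Real.sin θ ^ 2))
      = (ellipticK k - ellipticE k) / k ^ 2 := by
  have hk2 : k ^ 2 < 1 := by nlinarith
  rw [ellipticK, ellipticE, ← intervalIntegral.integral_sub (intK hk2) intE,
    ← intervalIntegral.integral_div]
  refine intervalIntegral.integral_congr fun θ _ => ?_
  have hq := Q_pos hk2 θ
  have hs := sqrtQ_pos hk2 θ
  have hsq : Real.sqrt (1 - k ^ 2 * Real.sin θ ^ 2) ^ 2 = 1 - k ^ 2 * Real.sin θ ^ 2 :=
    Real.sq_sqrt hq.le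
  rw [eq_div_iff (pow_ne_zero 2 hk0.ne'), div_mul_eq_mul_div, div_eq_iff hs.ne',
    sub_mul, one_div, inv_mul_cancel₀ hs.ne']
  linear_combination hsq

lemma int_s2J {k : ℝ} (hk0 : 0 < k) (hk1 : k < 1) :
    (∫ θ in (0:ℝ)..(Real.pi / 2), Real.sin θ ^ 2 /
        ((1 - k ^ 2 * Real.sin θ ^ 2) * Real.sqrt (1 - k ^ 2 * Real.sin θ ^ 2)))
      = (Jint k - ellipticK k) / k ^ 2 := by
  have hk2 : k ^ 2 < 1 := by nlinarith
  rw [Jint, ellipticK, ← intervalIntegral.integral_sub (intJ hk2) (intK hk2),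
    ← intervalIntegral.integral_div]
  refine intervalIntegral.integral_congr fun θ _ => ?_
  have hq := Q_pos hk2 θ
  have hs := sqrtQ_pos hk2 θ
  have hsq : Real.sqrt (1 - k ^ 2 * Real.sin θ ^ 2) ^ 2 = 1 - k ^ 2 * Real.sin θ ^ 2 :=
    Real.sq_sqrt hq.le
  rw [eq_div_iff (pow_ne_zero 2 hk0.ne'), div_mul_eq_mul_div,
    div_eq_iff (mul_ne_zero hq.ne' hs.ne')]
  rw [sub_mul, one_div_mul_cancel (mul_ne_zero hq.ne' hs.ne'), one_div, inv_mul_eq_div,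
    mul_div_cancel_right₀ _ hs.ne']
  ring

lemma J_eq {k : ℝ} (hk0 : 0 < k) (hk1 : k < 1) :
    Jint k = ellipticE k / (1 - k ^ 2) := by
  have hk2 : k ^ 2 < 1 := by nlinarith
  have h := ftc_identity hk2
  rw [intervalIntegral.integral_sub (intE.sub (((cont_s2E hk2).intervalIntegrable _ _).const_mul _))
      (((cont_s2J hk2).intervalIntegrable _ _).const_mul _),
    intervalIntegral.integral_sub intE (((cont_s2E hk2).intervalIntegrable _ _).const_mul _),
    intervalIntegral.integral_const_mul, intervalIntegral.integral_const_mul,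
    int_s2E hk0 hk1, int_s2J hk0 hk1] at h
  have hE : (∫ θ in (0:ℝ)..(Real.pi / 2), Real.sqrt (1 - k ^ 2 * Real.sin θ ^ 2))
      = ellipticE k := rfl
  rw [hE] at h
  have hne : (1:ℝ) - k ^ 2 ≠ 0 := by nlinarith
  have hkne : k ^ 2 ≠ 0 := by positivity
  field_simp at h ⊢
  nlinarith [h]

lemma hasDerivAt_K {k : ℝ} (hk0 : 0 < k) (hk1 : k < 1) :
    HasDerivAt ellipticK
      ((ellipticE k - (1 - k ^ 2) * ellipticK k) / (k * (1 - k ^ 2))) k := by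
  have hk2 : k ^ 2 < 1 := by nlinarith
  have h := hasDerivAt_K_aux hk0 hk1
  convert h using 1
  have step : (∫ θ in (0:ℝ)..(Real.pi / 2),
      k * Real.sin θ ^ 2 /
        ((1 - k ^ 2 * Real.sin θ ^ 2) * Real.sqrt (1 - k ^ 2 * Real.sin θ ^ 2)))
      = k * ((Jint k - ellipticK k) / k ^ 2) := by
    rw [← int_s2J hk0 hk1, ← intervalIntegral.integral_const_mul]
    exact intervalIntegral.integral_congr fun θ _ => (mul_div_assoc _ _ _)
  rw [step, J_eq hk0 hk1]
  have hne : (1:ℝ) - k ^ 2 ≠ 0 := by nlinarith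
  field_simp


lemma hasDerivAt_eta1 {k : ℝ} (hk0 : 0 < k) (hk1 : k < 1) :
    HasDerivAt eta1
      (((1 - k ^ 2) * (ellipticE k - (1 - k) * ellipticK k) *
        ((1 + k) * ellipticK k - ellipticE k)) /
        (2 * k * (2 * ellipticE k - (1 - k ^ 2) * ellipticK k) ^ 4)) k := by
  have hk2 : k ^ 2 < 1 := by nlinarith
  have hE := hasDerivAt_E hk0 hk1
  have hK := hasDerivAt_K hk0 hk1
  have hgpos := g_pos hk0 hk1
  have h1 : HasDerivAt (fun x : ℝ => 1 + x ^ 2) (2 * k) k := by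
    simpa using (hasDerivAt_pow 2 k).const_add 1
  have h2 : HasDerivAt (fun x : ℝ => 1 - x ^ 2) (-(2 * k)) k := by
    have := (hasDerivAt_pow 2 k).const_sub 1
    simpa using this
  have hmul1 := h1.mul hE
  have hmul2 := h2.mul hK
  have hfd := hmul1.sub hmul2
  have hgd := (hE.const_mul 2).sub hmul2
  have hg3 := hgd.pow 3
  have hden := hg3.const_mul 6
  have hne : 6 * (2 * ellipticE k - (1 - k ^ 2) * ellipticK k) ^ 3 ≠ 0 := by positivity
  have hquot := hfd.div hden hne
  have heta := hquot.const_add (-1 / 24 : ℝ)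
  have heq : eta1 = fun x : ℝ => -1 / 24 +
      ((1 + x ^ 2) * ellipticE x - (1 - x ^ 2) * ellipticK x) /
        (6 * (2 * ellipticE x - (1 - x ^ 2) * ellipticK x) ^ 3) := rfl
  rw [heq]
  refine heta.congr_deriv (Eq.symm ?_)
  have hgne := hgpos.ne'
  have hone : (1:ℝ) - k ^ 2 ≠ 0 := by nlinarith
  simp only [Pi.add_apply, Pi.sub_apply, Pi.mul_apply, Pi.pow_apply]
  norm_num
  field_simp
  ring

lemma deriv_eta1_pos {k : ℝ} (hk0 : 0 < k) (hk1 : k < 1) :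
    0 < ((1 - k ^ 2) * (ellipticE k - (1 - k) * ellipticK k) *
        ((1 + k) * ellipticK k - ellipticE k)) /
        (2 * k * (2 * ellipticE k - (1 - k ^ 2) * ellipticK k) ^ 4) := by
  have hk2 : k ^ 2 < 1 := by nlinarith
  apply div_pos
  · exact mul_pos (mul_pos (by nlinarith) (E_sub_one_sub_k_K_pos hk0 hk1))
      (one_add_k_K_sub_E_pos hk0 hk1)
  · have := g_pos hk0 hk1
    positivity

lemma eta1_strictMono : StrictMonoOn eta1 (Set.Ioo 0 1) := by
  apply strictMonoOn_of_deriv_pos (convex_Ioo 0 1)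
  · intro x hx
    exact (hasDerivAt_eta1 hx.1 hx.2).continuousAt.continuousWithinAt
  · intro x hx
    rw [interior_Ioo] at hx
    rw [(hasDerivAt_eta1 hx.1 hx.2).deriv]
    exact deriv_eta1_pos hx.1 hx.2


open Filter Topology

lemma tendsto_E_zero : Filter.Tendsto ellipticE (𝓝[>] (0:ℝ)) (𝓝 (Real.pi / 2)) := by
  have h := intervalIntegral.tendsto_integral_filter_of_dominated_convergence
    (μ := volume) (F := fun k θ => Real.sqrt (1 - k ^ 2 * Real.sin θ ^ 2))
    (f := fun _ : ℝ => (1:ℝ)) (a := 0) (b := Real.pi / 2) (l := 𝓝[>] (0:ℝ))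
    (fun _ => 1)
    (Filter.Eventually.of_forall fun k => contE.aestronglyMeasurable.restrict)
    (Filter.Eventually.of_forall fun k => (Filter.Eventually.of_forall fun θ _ => by
      rw [Real.norm_eq_abs, abs_of_nonneg (Real.sqrt_nonneg _)]
      exact Real.sqrt_le_one.2 (Q_le_one θ)))
    intervalIntegrable_const
    (Filter.Eventually.of_forall fun θ _ => by
      have hc : Continuous fun k : ℝ => Real.sqrt (1 - k ^ 2 * Real.sin θ ^ 2) := by fun_prop
      have h2 : Filter.Tendsto (fun k : ℝ => Real.sqrt (1 - k ^ 2 * Real.sin θ ^ 2))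
          (𝓝[>] (0:ℝ)) (𝓝 (Real.sqrt (1 - 0 ^ 2 * Real.sin θ ^ 2))) :=
        (hc.tendsto 0).mono_left (nhdsWithin_le_nhds (s := Set.Ioi (0:ℝ)))
      simpa using h2)
  simp at h
  exact h

lemma tendsto_K_zero : Filter.Tendsto ellipticK (𝓝[>] (0:ℝ)) (𝓝 (Real.pi / 2)) := by
  have hev : ∀ᶠ k in 𝓝[>] (0:ℝ), k ∈ Set.Ioo (0:ℝ) (1/2) :=
    Ioo_mem_nhdsGT_of_mem ⟨le_refl 0, by norm_num⟩
  have h := intervalIntegral.tendsto_integral_filter_of_dominated_convergence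
    (μ := volume) (F := fun k θ => 1 / Real.sqrt (1 - k ^ 2 * Real.sin θ ^ 2))
    (f := fun _ : ℝ => (1:ℝ)) (a := 0) (b := Real.pi / 2) (l := 𝓝[>] (0:ℝ))
    (fun _ => 2)
    (Filter.Eventually.of_forall fun k => Measurable.aestronglyMeasurable
      (measurable_const.div (Real.continuous_sqrt.measurable.comp
        ((continuous_const.sub (continuous_const.mul
          (Real.continuous_sin.pow 2))).measurable))))
    ?_ intervalIntegrable_const
    (Filter.Eventually.of_forall fun θ _ => ?_)
  · have hval : (∫ _x in (0:ℝ)..(Real.pi/2), (1:ℝ)) = Real.pi / 2 := by simp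
    rw [hval] at h
    exact h
  · filter_upwards [hev] with k hk
    refine Filter.Eventually.of_forall fun θ _ => ?_
    have hk2 : k ^ 2 < 1 := by nlinarith [hk.1, hk.2]
    have hq := Q_pos hk2 θ
    have hs := sqrtQ_pos hk2 θ
    have hge : (1:ℝ)/2 ≤ Real.sqrt (1 - k ^ 2 * Real.sin θ ^ 2) := by
      rw [show (1:ℝ)/2 = Real.sqrt (1/4) by
        rw [show (1:ℝ)/4 = (1/2)^2 by norm_num, Real.sqrt_sq (by norm_num)]]
      apply Real.sqrt_le_sqrt
      nlinarith [Real.sin_sq_le_one θ, sq_nonneg (Real.sin θ), hk.1, hk.2]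
    rw [Real.norm_eq_abs, abs_of_pos (by positivity)]
    rw [div_le_iff₀ hs]
    linarith
  · have hc : Continuous fun k : ℝ => 1 - k ^ 2 * Real.sin θ ^ 2 := by fun_prop
    have h1 : Filter.Tendsto (fun k : ℝ => Real.sqrt (1 - k ^ 2 * Real.sin θ ^ 2))
        (𝓝[>] (0:ℝ)) (𝓝 1) := by
      have h2 := ((Real.continuous_sqrt.comp hc).tendsto 0).mono_left
        (nhdsWithin_le_nhds (s := Set.Ioi (0:ℝ)))
      simpa [Function.comp_def] using h2
    have h3 : Filter.Tendsto (fun k : ℝ => 1 / Real.sqrt (1 - k ^ 2 * Real.sin θ ^ 2))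
        (𝓝[>] (0:ℝ)) (𝓝 (1 / 1)) := tendsto_const_nhds.div h1 (by norm_num)
    simpa using h3

lemma tendsto_eta1_zero : Filter.Tendsto eta1 (𝓝[>] (0:ℝ)) (𝓝 (-1 / 24)) := by
  have hsq : Filter.Tendsto (fun k : ℝ => k ^ 2) (𝓝[>] (0:ℝ)) (𝓝 0) := by
    have := ((continuous_pow 2).tendsto (0:ℝ)).mono_left (nhdsWithin_le_nhds (s := Set.Ioi 0))
    simpa using this
  have hE := tendsto_E_zero
  have hK := tendsto_K_zero
  have ha : Filter.Tendsto (fun k : ℝ => 1 + k ^ 2) (𝓝[>] (0:ℝ)) (𝓝 (1 + 0)) :=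
    tendsto_const_nhds.add hsq
  have hb : Filter.Tendsto (fun k : ℝ => 1 - k ^ 2) (𝓝[>] (0:ℝ)) (𝓝 (1 - 0)) :=
    tendsto_const_nhds.sub hsq
  have hf : Filter.Tendsto
      (fun k => (1 + k ^ 2) * ellipticE k - (1 - k ^ 2) * ellipticK k)
      (𝓝[>] (0:ℝ)) (𝓝 0) := by
    have := (ha.mul hE).sub (hb.mul hK)
    simpa using this
  have hg : Filter.Tendsto
      (fun k => 6 * (2 * ellipticE k - (1 - k ^ 2) * ellipticK k) ^ 3)
      (𝓝[>] (0:ℝ)) (𝓝 (6 * (Real.pi / 2) ^ 3)) := by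
    have h5 := (((hE.const_mul 2).sub (hb.mul hK)).pow 3).const_mul 6
    have heq : (2 * (Real.pi / 2) - (1 - 0) * (Real.pi / 2)) = Real.pi / 2 := by ring
    rw [heq] at h5
    exact h5
  have hne : (6 : ℝ) * (Real.pi / 2) ^ 3 ≠ 0 := by
    have := Real.pi_pos; positivity
  have := (hf.div hg hne).const_add (-1/24 : ℝ)
  simp at this
  exact this

lemma tendsto_E_one : Filter.Tendsto ellipticE (𝓝[<] (1:ℝ)) (𝓝 1) := by
  have hpi := Real.pi_pos
  have h := intervalIntegral.tendsto_integral_filter_of_dominated_convergence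
    (μ := volume) (F := fun k θ => Real.sqrt (1 - k ^ 2 * Real.sin θ ^ 2))
    (f := Real.cos) (a := 0) (b := Real.pi / 2) (l := 𝓝[<] (1:ℝ))
    (fun _ => 1)
    (Filter.Eventually.of_forall fun k => contE.aestronglyMeasurable.restrict)
    (Filter.Eventually.of_forall fun k => (Filter.Eventually.of_forall fun θ _ => by
      rw [Real.norm_eq_abs, abs_of_nonneg (Real.sqrt_nonneg _)]
      exact Real.sqrt_le_one.2 (Q_le_one θ)))
    intervalIntegrable_const
    (Filter.Eventually.of_forall fun θ hθ => ?_)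
  · rw [integral_cos] at h
    simp at h
    exact h
  · rw [Set.uIoc_of_le (by linarith : (0:ℝ) ≤ Real.pi / 2)] at hθ
    have hcos : 0 ≤ Real.cos θ := Real.cos_nonneg_of_mem_Icc ⟨by linarith [hθ.1], hθ.2⟩
    have hc : Continuous fun k : ℝ => Real.sqrt (1 - k ^ 2 * Real.sin θ ^ 2) := by fun_prop
    have h1 := (hc.tendsto 1).mono_left (nhdsWithin_le_nhds (s := Set.Iio 1))
    have hval : Real.sqrt (1 - 1 ^ 2 * Real.sin θ ^ 2) = Real.cos θ := by
      rw [one_pow, one_mul, show (1:ℝ) - Real.sin θ ^ 2 = Real.cos θ ^ 2 by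
        nlinarith [Real.sin_sq_add_cos_sq θ], Real.sqrt_sq hcos]
    rwa [hval] at h1

lemma tendsto_vK_one :
    Filter.Tendsto (fun k => (1 - k ^ 2) * ellipticK k) (𝓝[<] (1:ℝ)) (𝓝 0) := by
  have hpi := Real.pi_pos
  have hev : ∀ᶠ k in 𝓝[<] (1:ℝ), k ∈ Set.Ioo (0:ℝ) 1 :=
    Ioo_mem_nhdsLT_of_mem ⟨by norm_num, le_refl 1⟩
  have hupper : Filter.Tendsto (fun k : ℝ => Real.pi / 2 * Real.sqrt (1 - k ^ 2))
      (𝓝[<] (1:ℝ)) (𝓝 0) := by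
    have hc : Continuous fun k : ℝ => Real.pi / 2 * Real.sqrt (1 - k ^ 2) := by fun_prop
    have := (hc.tendsto 1).mono_left (nhdsWithin_le_nhds (s := Set.Iio 1))
    simpa using this
  apply squeeze_zero' ?_ ?_ hupper
  · filter_upwards [hev] with k hk
    have hk2 : k ^ 2 < 1 := by nlinarith [hk.1, hk.2]
    have hK := K_ge hk2
    nlinarith
  · filter_upwards [hev] with k hk
    have hk2 : k ^ 2 < 1 := by nlinarith [hk.1, hk.2]
    have h1k : (0:ℝ) < 1 - k ^ 2 := by linarith
    have hsk : 0 < Real.sqrt (1 - k ^ 2) := Real.sqrt_pos.2 h1k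
    have hKle : ellipticK k ≤ Real.pi / 2 * (1 / Real.sqrt (1 - k ^ 2)) := by
      have h := intervalIntegral.integral_mono_on (μ := volume)
        (f := fun θ : ℝ => 1 / Real.sqrt (1 - k ^ 2 * Real.sin θ ^ 2))
        (g := fun _ : ℝ => 1 / Real.sqrt (1 - k ^ 2)) (by positivity) (intK hk2)
        intervalIntegrable_const ?_
      · simpa [ellipticK, one_div] using h
      · intro θ _
        apply div_le_div_of_nonneg_left (by norm_num) hsk
        exact Real.sqrt_le_sqrt (Q_lb θ)
    calc (1 - k ^ 2) * ellipticK k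
        ≤ (1 - k ^ 2) * (Real.pi / 2 * (1 / Real.sqrt (1 - k ^ 2))) := by
          apply mul_le_mul_of_nonneg_left hKle h1k.le
      _ = Real.pi / 2 * ((1 - k ^ 2) / Real.sqrt (1 - k ^ 2)) := by ring
      _ = Real.pi / 2 * Real.sqrt (1 - k ^ 2) := by rw [Real.div_sqrt]

lemma tendsto_eta1_one : Filter.Tendsto eta1 (𝓝[<] (1:ℝ)) (𝓝 0) := by
  have hsq : Filter.Tendsto (fun k : ℝ => k ^ 2) (𝓝[<] (1:ℝ)) (𝓝 1) := by
    have := ((continuous_pow 2).tendsto (1:ℝ)).mono_left (nhdsWithin_le_nhds (s := Set.Iio 1))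
    simpa using this
  have hE := tendsto_E_one
  have hvK := tendsto_vK_one
  have ha : Filter.Tendsto (fun k : ℝ => 1 + k ^ 2) (𝓝[<] (1:ℝ)) (𝓝 (1 + 1)) :=
    tendsto_const_nhds.add hsq
  have hf : Filter.Tendsto
      (fun k => (1 + k ^ 2) * ellipticE k - (1 - k ^ 2) * ellipticK k)
      (𝓝[<] (1:ℝ)) (𝓝 2) := by
    have h5 := (ha.mul hE).sub hvK
    norm_num at h5
    exact h5
  have hg : Filter.Tendsto
      (fun k => 6 * (2 * ellipticE k - (1 - k ^ 2) * ellipticK k) ^ 3)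
      (𝓝[<] (1:ℝ)) (𝓝 (6 * 2 ^ 3)) := by
    have h5 := (((hE.const_mul 2).sub hvK).pow 3).const_mul 6
    have heq : (2 * 1 - 0 : ℝ) = 2 := by norm_num
    rw [heq] at h5
    exact h5
  have := (hf.div hg (by norm_num)).const_add (-1/24 : ℝ)
  have heq : (-1/24 : ℝ) + 2 / (6 * 2 ^ 3) = 0 := by norm_num
  rw [heq] at this
  exact this


lemma eta1_lt_zero {k : ℝ} (hk : k ∈ Set.Ioo (0:ℝ) 1) : eta1 k < 0 := by
  obtain ⟨hk0, hk1⟩ := hk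
  set k' : ℝ := (k + 1) / 2 with hk'
  have hkk' : k < k' := by rw [hk']; linarith
  have hk'1 : k' < 1 := by rw [hk']; linarith
  have hk'0 : 0 < k' := by rw [hk']; linarith
  have h1 : eta1 k < eta1 k' :=
    eta1_strictMono ⟨hk0, hk1⟩ ⟨hk'0, hk'1⟩ hkk'
  have h2 : eta1 k' ≤ 0 := by
    refine ge_of_tendsto tendsto_eta1_one ?_
    filter_upwards [Ioo_mem_nhdsLT_of_mem (⟨hk'1, le_refl 1⟩ : (1:ℝ) ∈ Set.Ioc k' 1)]
      with x hx
    exact (eta1_strictMono ⟨hk'0, hk'1⟩ ⟨hk'0.trans hx.1, hx.2⟩ hx.1).le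
  linarith

lemma neg_lt_eta1 {k : ℝ} (hk : k ∈ Set.Ioo (0:ℝ) 1) : -1 / 24 < eta1 k := by
  obtain ⟨hk0, hk1⟩ := hk
  set k' : ℝ := k / 2 with hk'
  have hkk' : k' < k := by rw [hk']; linarith
  have hk'1 : k' < 1 := by rw [hk']; linarith
  have hk'0 : 0 < k' := by rw [hk']; linarith
  have h1 : eta1 k' < eta1 k :=
    eta1_strictMono ⟨hk'0, hk'1⟩ ⟨hk0, hk1⟩ hkk'
  have h2 : -1 / 24 ≤ eta1 k' := by
    refine le_of_tendsto tendsto_eta1_zero ?_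
    filter_upwards [Ioo_mem_nhdsGT_of_mem (⟨le_refl 0, hk'0⟩ : (0:ℝ) ∈ Set.Ico 0 k')]
      with x hx
    exact (eta1_strictMono ⟨hx.1, hx.2.trans hk'1⟩ ⟨hk'0, hk'1⟩ hx.2).le
  linarith

lemma eta1_surjOn : Set.SurjOn eta1 (Set.Ioo (0:ℝ) 1) (Set.Ioo (-1/24 : ℝ) 0) := by
  intro y hy
  obtain ⟨hy1, hy2⟩ := hy
  have hb : ∃ b : ℝ, (y < eta1 b) ∧ b ∈ Set.Ioo (0:ℝ) 1 := by
    have h1 : ∀ᶠ x in 𝓝[<] (1:ℝ), y < eta1 x :=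
      tendsto_eta1_one.eventually (eventually_gt_nhds hy2)
    have h2 : ∀ᶠ x in 𝓝[<] (1:ℝ), x ∈ Set.Ioo (0:ℝ) 1 :=
      Ioo_mem_nhdsLT_of_mem ⟨by norm_num, le_refl 1⟩
    exact (h1.and h2).exists
  obtain ⟨b, hyb, hb01⟩ := hb
  have ha : ∃ a : ℝ, (eta1 a < y) ∧ a ∈ Set.Ioo (0:ℝ) b := by
    have h1 : ∀ᶠ x in 𝓝[>] (0:ℝ), eta1 x < y :=
      tendsto_eta1_zero.eventually (eventually_lt_nhds hy1)
    have h2 : ∀ᶠ x in 𝓝[>] (0:ℝ), x ∈ Set.Ioo (0:ℝ) b :=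
      Ioo_mem_nhdsGT_of_mem ⟨le_refl 0, hb01.1⟩
    exact (h1.and h2).exists
  obtain ⟨a, hay, ha0b⟩ := ha
  have ha01 : a ∈ Set.Ioo (0:ℝ) 1 := ⟨ha0b.1, ha0b.2.trans hb01.2⟩
  have hcont : ContinuousOn eta1 (Set.Icc a b) := by
    intro x hx
    have hx01 : x ∈ Set.Ioo (0:ℝ) 1 := ⟨lt_of_lt_of_le ha01.1 hx.1, lt_of_le_of_lt hx.2 hb01.2⟩
    exact (hasDerivAt_eta1 hx01.1 hx01.2).continuousAt.continuousWithinAt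
  have hsub := intermediate_value_Ioo (le_of_lt ha0b.2) hcont
  have hmem : y ∈ Set.Ioo (eta1 a) (eta1 b) := ⟨hay, hyb⟩
  obtain ⟨x, hxab, hxy⟩ := hsub hmem
  exact ⟨x, ⟨⟨lt_of_le_of_lt ha01.1.le hxab.1, lt_of_lt_of_le hxab.2 hb01.2.le⟩, hxy⟩⟩

end Eta1Aux

open Filter Topology in
/-- `η₁` is strictly increasing on `(0,1)`, tends to `−1/24` as `k → 0⁺`, tends to `0`
as `k → 1⁻`, and is a bijection from `(0,1)` onto `(−1/24, 0)`. -/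
theorem eta1_properties :
    StrictMonoOn eta1 (Set.Ioo 0 1) ∧
      Tendsto eta1 (𝓝[>] 0) (𝓝 (-1 / 24)) ∧
      Tendsto eta1 (𝓝[<] 1) (𝓝 0) ∧
      Set.BijOn eta1 (Set.Ioo 0 1) (Set.Ioo (-1 / 24) 0) := by
  refine ⟨Eta1Aux.eta1_strictMono, Eta1Aux.tendsto_eta1_zero, Eta1Aux.tendsto_eta1_one,
    ?_, ?_, ?_⟩
  · intro k hk
    exact ⟨Eta1Aux.neg_lt_eta1 hk, Eta1Aux.eta1_lt_zero hk⟩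
  · exact Eta1Aux.eta1_strictMono.injOn
  · exact Eta1Aux.eta1_surjOn
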